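/- For every fixed z > 0, the function h₁(x) = x ( ln(1 + z/x) − z/x ) is strictly increasing in x on (0,∞). -/

import Mathlib

/-- **Fact.** For every fixed `z > 0`, `h₁(x) = x (ln(1 + z/x) − z/x)` is strictly
increasing on `(0,∞)`. -/
theorem h1_strictMono (z : ℝ) (hz : 0 < z) :
    StrictMonoOn (fun x : ℝ => x * (Real.log (1 + z / x) - z / x)) (Set.Ioi 0) := by
  have key : StrictMonoOn (fun x : ℝ => x * Real.log (1 + z / x) - z) (Set.Ioi 0) := by
    have hderiv : ∀ x ∈ Set.Ioi (0:ℝ),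
        HasDerivAt (fun x : ℝ => x * Real.log (1 + z / x) - z)
          (Real.log (1 + z / x) - z / (x + z)) x := by
      intro x hx
      have hx0 : (0:ℝ) < x := hx
      have hu : (0:ℝ) < 1 + z / x := by positivity
      have h1 : HasDerivAt (fun x : ℝ => 1 + z / x) (-(z / x ^ 2)) x := by
        have := ((hasDerivAt_inv hx0.ne').const_mul z).const_add 1
        simpa [div_eq_mul_inv, mul_comm] using this
      have h2 : HasDerivAt (fun x : ℝ => Real.log (1 + z / x))
          (-(z / x ^ 2) / (1 + z / x)) x := h1.log hu.ne'
      have h3 := ((hasDerivAt_id x).mul h2).sub_const z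
      refine h3.congr_deriv ?_
      have hxz : x + z ≠ 0 := by positivity
      have hx1 : x ≠ 0 := hx0.ne'
      rw [id]
      field_simp
      ring
    apply StrictMonoOn.mono (strictMonoOn_of_deriv_pos (convex_Ioi 0)
      (fun x hx => (hderiv x hx).continuousAt.continuousWithinAt) ?_) le_rfl
    intro x hx
    rw [interior_Ioi] at hx
    rw [(hderiv x hx).deriv]
    have hx0 : (0:ℝ) < x := hx
    have hxz : (0:ℝ) < x + z := by positivity
    have hne : x / (x + z) ≠ 1 := by
      intro h
      have : x = x + z := by
        field_simp at h
        linarith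
      linarith
    have hlt : Real.log (x / (x + z)) < x / (x + z) - 1 :=
      Real.log_lt_sub_one_of_pos (by positivity) hne
    have heq : Real.log (x / (x + z)) = -Real.log (1 + z / x) := by
      rw [Real.log_div hx0.ne' hxz.ne']
      have : 1 + z / x = (x + z) / x := by field_simp
      rw [this, Real.log_div hxz.ne' hx0.ne']
      ring
    have heq2 : x / (x + z) - 1 = -(z / (x + z)) := by field_simp; ring
    rw [heq, heq2] at hlt
    linarith
  intro a ha b hb hab
  have h := key ha hb hab
  have ha0 : (0:ℝ) < a := ha
  have hb0 : (0:ℝ) < b := hb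
  have ea : a * (Real.log (1 + z / a) - z / a) = a * Real.log (1 + z / a) - z := by
    field_simp
  have eb : b * (Real.log (1 + z / b) - z / b) = b * Real.log (1 + z / b) - z := by
    field_simp
  simpa [ea, eb] using h
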